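/- Let T be a game tree, A ⊆ [T], and B ⊆ A with B = ⋂_{n∈ℕ} Dₙ where each Dₙ ⊆ ℕ^ℕ is open. Suppose player I has no winning strategy in G(A; T), and let T' be II's non-losing quasi-strategy for G(A;T). For n ∈ ℕ set Eₙ = A ∪ {x ∈ [T'] : there is a finite initial segment p of x with [T'_p] ⊆ Dₙ and p not good}. If there exists n ∈ ℕ such that player I has no winning strategy in G(Eₙ ∩ [T']; T'), then the empty position ∅ is good. -/

import Mathlib

/-- `T ⊆ List ℕ` is a game tree: nonempty, closed under prefixes, and with no
terminal nodes. -/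
def IsGameTree (T : Set (List ℕ)) : Prop :=
  T.Nonempty ∧ (∀ p ∈ T, ∀ q : List ℕ, q <+: p → q ∈ T) ∧
    ∀ p ∈ T, ∃ n : ℕ, p ++ [n] ∈ T

/-- The finite initial segment of `x : ℕ → ℕ` of length `k`, as a list. -/
def seg (x : ℕ → ℕ) (k : ℕ) : List ℕ := (List.range k).map x

/-- The body `[T]` of a tree: all infinite plays whose finite initial segments
all lie in `T`. -/
def body (T : Set (List ℕ)) : Set (ℕ → ℕ) := {x | ∀ k, seg x k ∈ T}

/-- The localization `T_p` of `T` at a position `p`: all positions comparable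
with `p`. -/
def restrict (T : Set (List ℕ)) (p : List ℕ) : Set (List ℕ) :=
  {q ∈ T | q <+: p ∨ p <+: q}

/-- `x` is a play consistent with `σ` used as a strategy for player I, who
moves at even stages. -/
def ConsWithI (σ : List ℕ → ℕ) (x : ℕ → ℕ) : Prop :=
  ∀ k, Even k → x k = σ (seg x k)

/-- `x` is a play consistent with `σ` used as a strategy for player II, who
moves at odd stages. -/
def ConsWithII (σ : List ℕ → ℕ) (x : ℕ → ℕ) : Prop :=
  ∀ k, ¬ Even k → x k = σ (seg x k)

/-- `σ` is a winning strategy for player I in the game `G(A; T)`: it assigns a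
legal move at every position of `T` where it is I's turn, and every play in
`[T]` consistent with it lies in `A`. -/
def WinStratI (T : Set (List ℕ)) (A : Set (ℕ → ℕ)) (σ : List ℕ → ℕ) : Prop :=
  (∀ p ∈ T, Even p.length → p ++ [σ p] ∈ T) ∧
    ∀ x ∈ body T, ConsWithI σ x → x ∈ A

/-- `σ` is a winning strategy for player II in the game `G(A; T)`: it assigns a
legal move at every position of `T` where it is II's turn, and every play in
`[T]` consistent with it lies outside `A`. -/
def WinStratII (T : Set (List ℕ)) (A : Set (ℕ → ℕ)) (σ : List ℕ → ℕ) : Prop :=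
  (∀ p ∈ T, ¬ Even p.length → p ++ [σ p] ∈ T) ∧
    ∀ x ∈ body T, ConsWithII σ x → x ∉ A

/-- `S` is a quasi-strategy for player II in the game tree `T`: a game
subtree which does not restrict I's moves. -/
def QuasiII (T S : Set (List ℕ)) : Prop :=
  IsGameTree S ∧ S ⊆ T ∧
    ∀ p ∈ S, Even p.length → ∀ n : ℕ, p ++ [n] ∈ T → p ++ [n] ∈ S

/-- Player II's non-losing quasi-strategy `T'` for `G(A ∩ [T]; T)`. -/
def NonLosing (T : Set (List ℕ)) (A : Set (ℕ → ℕ)) : Set (List ℕ) :=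
  {p ∈ T | ∀ q : List ℕ, q <+: p → Even q.length →
    ¬ ∃ σ, WinStratI (restrict T q) (A ∩ body (restrict T q)) σ}

/-- A position `p` of `T'` is good (w.r.t. `A` and `B ⊆ A`) if there is a
quasi-strategy `S` for II in `T'_p` with `[S] ∩ B = ∅` such that I has no
winning strategy in `G(A ∩ [S]; S)`. -/
def Good (T' : Set (List ℕ)) (A B : Set (ℕ → ℕ)) (p : List ℕ) : Prop :=
  p ∈ T' ∧ ∃ S : Set (List ℕ), QuasiII (restrict T' p) S ∧ body S ∩ B = ∅ ∧
    ¬ ∃ σ, WinStratI S (A ∩ body S) σ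

namespace EIG

/- ============ Section A : list/seg basics ============ -/

lemma seg_len (x : ℕ → ℕ) (k : ℕ) : (seg x k).length = k := by simp [seg]

lemma seg_zero (x : ℕ → ℕ) : seg x 0 = [] := rfl

lemma seg_succ (x : ℕ → ℕ) (k : ℕ) : seg x (k+1) = seg x k ++ [x k] := by
  simp [seg, List.range_succ]

lemma seg_take (x : ℕ → ℕ) {j k : ℕ} (h : j ≤ k) : (seg x k).take j = seg x j := by
  simp [seg, ← List.map_take, List.take_range, Nat.min_eq_left h]

lemma seg_prefix (x : ℕ → ℕ) {j k : ℕ} (h : j ≤ k) : seg x j <+: seg x k := by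
  rw [← seg_take x h]; exact List.take_prefix _ _

lemma seg_getElem (x : ℕ → ℕ) {k j : ℕ} (h : j < k) :
    (seg x k).getD j 0 = x j := by
  have hj : j < (seg x k).length := by rw [seg_len]; exact h
  rw [List.getD_eq_getElem _ _ hj]
  simp [seg]

lemma eq_seg_of_prefix {x : ℕ → ℕ} {p : List ℕ} {k : ℕ} (h : p <+: seg x k) :
    p = seg x p.length := by
  have hl : p.length ≤ k := by have := h.length_le; rwa [seg_len] at this
  conv_lhs => rw [List.prefix_iff_eq_take.mp h, seg_take x hl]

/-- `y` extends the finite position `p`. -/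
def Ext (p : List ℕ) (y : ℕ → ℕ) : Prop := seg y p.length = p

lemma prefix_getD {p q : List ℕ} (h : p <+: q) {j : ℕ} (hj : j < p.length) :
    q.getD j 0 = p.getD j 0 := by
  obtain ⟨t, rfl⟩ := h
  rw [List.getD_eq_getElem _ _ hj, List.getD_eq_getElem _ _ (by simp; omega)]
  exact List.getElem_append_left (bs := t) hj

lemma prefix_trichotomy {p q : List ℕ} (h : p <+: q ∨ q <+: p)
    (hl : p.length ≤ q.length) : p <+: q := by
  rcases h with h | h
  · exact h
  · have := h.length_le
    have heq : p = q := (h.eq_of_length (by omega)).symm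
    rw [heq]

lemma proper_length {p q : List ℕ} (h : p <+: q) (hne : p ≠ q) :
    p.length < q.length := by
  have h1 := h.length_le
  rcases lt_or_eq_of_le h1 with h2 | h2
  · exact h2
  · exact absurd (h.eq_of_length h2) hne

lemma take_next {p q : List ℕ} (h : p <+: q) (hne : p.length < q.length) :
    p ++ [q.getD p.length 0] <+: q := by
  have h2 : (q.take p.length) ++ [q.getD p.length 0] <+: q := by
    rw [List.getD_eq_getElem _ _ hne, ← List.concat_eq_append,
      List.take_concat_get]
    exact List.take_prefix _ _
  rwa [← List.prefix_iff_eq_take.mp h] at h2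

lemma append_singleton_prefix {p q : List ℕ} {n : ℕ} (h : p ++ [n] <+: q) :
    p <+: q ∧ q.getD p.length 0 = n := by
  constructor
  · exact ((List.prefix_append p [n]).trans h)
  · rw [prefix_getD h (by simp)]
    simp [List.getD_eq_getElem]

lemma getD_append_self (p : List ℕ) (n : ℕ) : (p ++ [n]).getD p.length 0 = n :=
  (append_singleton_prefix (List.prefix_rfl (l := p ++ [n]))).2

lemma prefix_take {p q : List ℕ} (h : q <+: p) {j : ℕ} (hj : j ≤ q.length) :
    q.take j = p.take j := by
  rw [List.prefix_iff_eq_take.mp h, List.take_take, min_eq_left hj]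

lemma ext_of_body_restrict {Y : Set (List ℕ)} {q : List ℕ} {x : ℕ → ℕ}
    (h : x ∈ body (restrict Y q)) : Ext q x := by
  have h1 := h q.length
  rcases h1.2 with h2 | h2
  · exact h2.eq_of_length (by rw [seg_len])
  · exact (h2.eq_of_length (by rw [seg_len])).symm

lemma body_restrict_subset {Y : Set (List ℕ)} {q : List ℕ} :
    body (restrict Y q) ⊆ body Y := fun _ hx k => (hx k).1

lemma mem_body_restrict {Y : Set (List ℕ)} {q : List ℕ} {x : ℕ → ℕ}
    (hx : x ∈ body Y) (hq : Ext q x) : x ∈ body (restrict Y q) := by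
  intro k
  refine ⟨hx k, ?_⟩
  rcases le_total k q.length with h | h
  · left; rw [← hq]; exact seg_prefix x h
  · right; rw [← hq]; exact seg_prefix x h

lemma restrict_nil (Y : Set (List ℕ)) : restrict Y [] = Y := by
  ext q; simp [restrict]

/- ============ Section B : trees, restrict, strategies ============ -/

abbrev WI (T : Set (List ℕ)) (X : Set (ℕ → ℕ)) : Prop := ∃ σ, WinStratI T X σ

open Classical in
noncomputable def legalMove (Z : Set (List ℕ)) (p : List ℕ) : ℕ :=
  if h : ∃ n, p ++ [n] ∈ Z then h.choose else 0

lemma legalMove_mem {Z : Set (List ℕ)} {p : List ℕ} (hZ : IsGameTree Z)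
    (hp : p ∈ Z) : p ++ [legalMove Z p] ∈ Z := by
  have h := hZ.2.2 p hp
  classical
  rw [legalMove]
  rw [dif_pos h]
  exact h.choose_spec

lemma mem_restrict_self {Y : Set (List ℕ)} {q : List ℕ} (h : q ∈ Y) :
    q ∈ restrict Y q := ⟨h, Or.inl List.prefix_rfl⟩

lemma restrict_subset {Y : Set (List ℕ)} {q : List ℕ} : restrict Y q ⊆ Y :=
  fun _ h => h.1

lemma isGameTree_restrict {Y : Set (List ℕ)} {q : List ℕ} (hY : IsGameTree Y)
    (hq : q ∈ Y) : IsGameTree (restrict Y q) := by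
  refine ⟨⟨q, mem_restrict_self hq⟩, ?_, ?_⟩
  · rintro t ⟨htY, htc⟩ r hr
    refine ⟨hY.2.1 t htY r hr, ?_⟩
    rcases htc with h | h
    · exact Or.inl (hr.trans h)
    · exact List.prefix_or_prefix_of_prefix hr h
  · rintro t ⟨htY, htc⟩
    rcases htc with h | h
    · by_cases he : t = q
      · subst he
        obtain ⟨n, hn⟩ := hY.2.2 t htY
        exact ⟨n, hn, Or.inr (List.prefix_append _ _)⟩
      · refine ⟨q.getD t.length 0, ?_, Or.inl (take_next h (proper_length h he))⟩
        exact hY.2.1 q hq _ (take_next h (proper_length h he))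
    · obtain ⟨n, hn⟩ := hY.2.2 t htY
      exact ⟨n, hn, Or.inr (h.trans (List.prefix_append _ _))⟩

lemma stem_forced {Y : Set (List ℕ)} {q : List ℕ} {X' : Set (ℕ → ℕ)}
    {σ : List ℕ → ℕ} (hσ : WinStratI (restrict Y q) X' σ) {t : List ℕ}
    (ht : t ∈ Y) (htq : t <+: q) (hlt : t.length < q.length)
    (hev : Even t.length) : σ t = q.getD t.length 0 := by
  have h2 := hσ.1 t ⟨ht, Or.inl htq⟩ hev
  have h3 : t ++ [σ t] <+: q := prefix_trichotomy h2.2 (by simp; omega)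
  exact ((append_singleton_prefix h3).2).symm

lemma win_tail {Y : Set (List ℕ)} {r : List ℕ} {X' : Set (ℕ → ℕ)}
    {σ : List ℕ → ℕ} (hσ : WinStratI (restrict Y r) X' σ) {x : ℕ → ℕ}
    (hx : x ∈ body Y) (hr : Ext r x)
    (hc : ∀ j, Even j → r.length ≤ j → x j = σ (seg x j)) : x ∈ X' := by
  refine hσ.2 x (mem_body_restrict hx hr) ?_
  intro j hj
  rcases lt_or_ge j r.length with h | h
  · have hpre : seg x j <+: r := by rw [← hr]; exact seg_prefix x h.le
    have h1 : σ (seg x j) = r.getD j 0 := by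
      have := stem_forced hσ (hx j) hpre (by rw [seg_len]; exact h)
        (by rw [seg_len]; exact hj)
      rwa [seg_len] at this
    rw [h1, ← hr, seg_getElem x h]
  · exact hc j hj h

lemma wi_of_body_subset {Z : Set (List ℕ)} {X : Set (ℕ → ℕ)}
    (hZ : IsGameTree Z) (h : body Z ⊆ X) : WI Z X :=
  ⟨fun p => legalMove Z p, fun p hp _ => legalMove_mem hZ hp,
    fun x hx _ => h hx⟩

end EIG

namespace EIG

variable {Y : Set (List ℕ)} {X : Set (ℕ → ℕ)}

lemma nl_mem {p : List ℕ} : p ∈ NonLosing Y X ↔ p ∈ Y ∧ ∀ q : List ℕ,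
    q <+: p → Even q.length →
    ¬ WI (restrict Y q) (X ∩ body (restrict Y q)) := Iff.rfl

lemma nl_subset : NonLosing Y X ⊆ Y := fun _ h => h.1

lemma nl_prefix (hY : IsGameTree Y) {p r : List ℕ} (h : p ∈ NonLosing Y X)
    (hr : r <+: p) : r ∈ NonLosing Y X :=
  ⟨hY.2.1 p h.1 r hr, fun q hq he => h.2 q (hq.trans hr) he⟩

lemma nl_not_loc {p : List ℕ} (h : p ∈ NonLosing Y X) (he : Even p.length) :
    ¬ WI (restrict Y p) (X ∩ body (restrict Y p)) :=
  h.2 p List.prefix_rfl he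

lemma nl_nil (hY : IsGameTree Y) (h0 : ¬ WI Y (X ∩ body Y)) :
    [] ∈ NonLosing Y X := by
  obtain ⟨p, hp⟩ := hY.1
  refine ⟨hY.2.1 p hp [] List.nil_prefix, ?_⟩
  intro q hq _
  rw [List.prefix_nil.mp hq, restrict_nil]
  exact h0

lemma nl_even_step {p : List ℕ} {n : ℕ} (h : p ∈ NonLosing Y X)
    (he : Even p.length) (hn : p ++ [n] ∈ Y) : p ++ [n] ∈ NonLosing Y X := by
  refine ⟨hn, ?_⟩
  intro q hq hqe
  have hne : q ≠ p ++ [n] := by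
    intro heq
    rw [heq, List.length_append, List.length_singleton, Nat.even_add_one] at hqe
    exact hqe he
  have hqp : q <+: p := by
    refine prefix_trichotomy (List.prefix_or_prefix_of_prefix hq (List.prefix_append p [n])) ?_
    have := proper_length hq hne
    simp at this
    omega
  exact h.2 q hqp hqe

lemma nl_exit (hY : IsGameTree Y) {p : List ℕ} (hp : p ∈ Y)
    (h : p ∉ NonLosing Y X) (hmin : ∀ q, q <+: p → q ≠ p → q ∈ NonLosing Y X) :
    Even p.length ∧ WI (restrict Y p) (X ∩ body (restrict Y p)) := by
  rw [nl_mem] at h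
  push_neg at h
  obtain ⟨q, hq, hqe, hwi⟩ := h hp
  rcases eq_or_ne q p with rfl | hne
  · exact ⟨hqe, hwi⟩
  · exact absurd hwi (nl_not_loc (hmin q hq hne) hqe)

lemma nl_odd_step (hY : IsGameTree Y) {p : List ℕ} (h : p ∈ NonLosing Y X)
    (ho : ¬ Even p.length) : ∃ n, p ++ [n] ∈ NonLosing Y X := by
  classical
  by_contra hc
  push_neg at hc
  have hall : ∀ n, p ++ [n] ∈ Y →
      WI (restrict Y (p ++ [n])) (X ∩ body (restrict Y (p ++ [n]))) := by
    intro n hn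
    refine (nl_exit hY hn (hc n) ?_).2
    intro q hq hne
    have hqp : q <+: p := by
      refine prefix_trichotomy (List.prefix_or_prefix_of_prefix hq (List.prefix_append p [n])) ?_
      have := proper_length hq hne
      simp at this
      omega
    exact nl_prefix hY h hqp
  have hpne : p ≠ [] := by rintro rfl; simp at ho
  set q := p.dropLast with hqdef
  have hqp : q <+: p := List.dropLast_prefix p
  have hql : q.length + 1 = p.length := by
    simp [hqdef]
    have : 0 < p.length := List.length_pos_iff.mpr hpne
    omega
  have hqe : Even q.length := by
    rw [Nat.not_even_iff_odd] at ho
    rcases ho with ⟨m, hm⟩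
    exact ⟨m / 1, by omega⟩
  have hqnep : q ≠ p := by intro h'; rw [h'] at hql; omega
  -- strategy family for children
  set F : ℕ → List ℕ → ℕ := fun n =>
    if h : WI (restrict Y (p ++ [n])) (X ∩ body (restrict Y (p ++ [n]))) then
      h.choose else fun _ => 0 with hFdef
  have hF : ∀ n, p ++ [n] ∈ Y →
      WinStratI (restrict Y (p ++ [n])) (X ∩ body (restrict Y (p ++ [n]))) (F n) := by
    intro n hn
    have h' := hall n hn
    simp only [hFdef, dif_pos h']
    exact h'.choose_spec
  set σs : List ℕ → ℕ := fun t =>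
    if t <+: p ∧ t ≠ p then p.getD t.length 0
    else if p <+: t ∧ p ≠ t then F (t.getD p.length 0) t
    else legalMove Y t with hσdef
  refine h.2 q hqp hqe ⟨σs, ?_, ?_⟩
  · -- legality
    rintro t ⟨htY, htc⟩ hev
    by_cases h1 : t <+: p ∧ t ≠ p
    · simp only [hσdef, if_pos h1]
      have hpre := take_next h1.1 (proper_length h1.1 h1.2)
      exact ⟨hY.2.1 p (nl_subset h) _ hpre,
        List.prefix_or_prefix_of_prefix hpre hqp⟩
    · by_cases h2 : p <+: t ∧ p ≠ t
      · simp only [hσdef, if_neg h1, if_pos h2]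
        have hpn : p ++ [t.getD p.length 0] <+: t :=
          take_next h2.1 (proper_length h2.1 h2.2)
        have hmem : p ++ [t.getD p.length 0] ∈ Y := hY.2.1 t htY _ hpn
        have hleg := (hF _ hmem).1 t ⟨htY, Or.inr hpn⟩ hev
        refine ⟨restrict_subset hleg, Or.inr ?_⟩
        exact (hqp.trans (List.prefix_append _ _)).trans
          (hpn.trans (List.prefix_append _ _))
      · simp only [hσdef, if_neg h1, if_neg h2]
        have hqt : q <+: t := by
          rcases htc with h3 | h3
          · exfalso
            apply h1
            constructor
            · exact h3.trans hqp
            · intro heq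
              rw [heq] at h3
              have := proper_length hqp hqnep
              have := h3.length_le
              omega
          · exact h3
        exact ⟨legalMove_mem hY htY,
          Or.inr (hqt.trans (List.prefix_append _ _))⟩
  · -- winning
    intro x hx hcons
    have hExtq : Ext q x := ext_of_body_restrict hx
    have hxq : x q.length = p.getD q.length 0 := by
      have hc1 := hcons q.length hqe
      rw [Ext] at hExtq
      rw [hExtq] at hc1
      simp only [hσdef] at hc1
      rwa [if_pos ⟨hqp, hqnep⟩] at hc1
    have hExtp : Ext p x := by
      rw [Ext, ← hql, seg_succ, hExtq, hxq]
      have hg : p.getD q.length 0 = p.getLast hpne := by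
        rw [List.getLast_eq_getElem, List.getD_eq_getElem _ _ (by omega)]
        congr 1
        omega
      rw [hg, hqdef, List.dropLast_append_getLast]
    set m := x p.length with hmdef
    have hpm : seg x (p.length + 1) = p ++ [m] := by
      rw [seg_succ, hExtp]
    have hmem : p ++ [m] ∈ Y := by
      have := (hx (p.length + 1)).1
      rwa [hpm] at this
    have hwin := win_tail (hF m hmem) (body_restrict_subset hx)
      (by rw [Ext, List.length_append, List.length_singleton, hpm]) ?_
    · exact ⟨hwin.1, hx⟩
    · intro j hj hjl
      simp at hjl
      have hc1 := hcons j hj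
      have hpre : p <+: seg x j := by
        rw [← hExtp]
        exact seg_prefix x (by omega)
      have hne : p ≠ seg x j := by
        intro heq
        have := congrArg List.length heq
        rw [seg_len] at this
        omega
      have hnot1 : ¬ (seg x j <+: p ∧ seg x j ≠ p) := by
        rintro ⟨h3, _⟩
        have h4 := h3.length_le
        rw [seg_len] at h4
        omega
      simp only [hσdef] at hc1
      rw [if_neg hnot1, if_pos ⟨hpre, hne⟩] at hc1
      rwa [seg_getElem x (by omega : p.length < j), ← hmdef] at hc1

lemma nl_tree (hY : IsGameTree Y) (h0 : ¬ WI Y (X ∩ body Y)) :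
    IsGameTree (NonLosing Y X) := by
  refine ⟨⟨[], nl_nil hY h0⟩, fun p hp r hr => nl_prefix hY hp hr, ?_⟩
  intro p hp
  rcases Nat.even_or_odd p.length with he | ho
  · obtain ⟨n, hn⟩ := hY.2.2 p (nl_subset hp)
    exact ⟨n, nl_even_step hp he hn⟩
  · exact nl_odd_step hY hp (Nat.not_even_iff_odd.mpr ho)

lemma nl_quasi (hY : IsGameTree Y) (h0 : ¬ WI Y (X ∩ body Y)) :
    QuasiII Y (NonLosing Y X) :=
  ⟨nl_tree hY h0, nl_subset, fun p hp he n hn => nl_even_step hp he hn⟩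

end EIG

namespace EIG

open Classical in
noncomputable def exitPt (N : Set (List ℕ)) (t : List ℕ) : List ℕ :=
  if h : ∃ m, t.take m ∉ N then t.take (Nat.find h) else t

lemma exitPt_prefix (N : Set (List ℕ)) (t : List ℕ) : exitPt N t <+: t := by
  classical
  rw [exitPt]
  split
  · exact List.take_prefix _ _
  · exact List.prefix_rfl

lemma exitPt_eq {N : Set (List ℕ)} {t r : List ℕ} (hr : r <+: t) (h1 : r ∉ N)
    (h2 : ∀ q, q <+: r → q ≠ r → q ∈ N) : exitPt N t = r := by
  classical
  have hrt : r = t.take r.length := List.prefix_iff_eq_take.mp hr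
  have hex : ∃ m, t.take m ∉ N := ⟨r.length, by rw [← hrt]; exact h1⟩
  rw [exitPt, dif_pos hex]
  have hfind : Nat.find hex = r.length := by
    rw [Nat.find_eq_iff]
    refine ⟨by rw [← hrt]; exact h1, ?_⟩
    intro m hm hnot
    have hmlen : m ≤ t.length := by
      have := hr.length_le
      omega
    have htake : t.take m = r.take m := by
      rw [hrt, List.take_take, min_eq_left hm.le]
    apply hnot
    rw [htake]
    refine h2 _ (List.take_prefix _ _) ?_
    intro heq
    have := congrArg List.length heq
    rw [List.length_take] at this
    omega
  rw [hfind, ← hrt]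

variable {Y : Set (List ℕ)} {X : Set (ℕ → ℕ)}

lemma patch (hY : IsGameTree Y) (G : Set (List ℕ)) (σ : List ℕ → ℕ)
    (hGN : G ⊆ NonLosing Y X) (h0 : [] ∈ G)
    (hstep : ∀ p ∈ G, Even p.length → p ++ [σ p] ∈ G)
    (hII : ∀ p ∈ G, ¬ Even p.length → ∀ n, p ++ [n] ∈ NonLosing Y X → p ++ [n] ∈ G)
    (hwin : ∀ x ∈ body Y, (∀ k, seg x k ∈ G) → ConsWithI σ x → x ∈ X) :
    WI Y (X ∩ body Y) := by
  classical
  set N := NonLosing Y X with hNdef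
  set τ : List ℕ → ℕ := fun t =>
    if t ∈ G then σ t
    else if h : WI (restrict Y (exitPt N t)) (X ∩ body (restrict Y (exitPt N t)))
      then h.choose t
    else legalMove Y t with hτdef
  refine ⟨τ, ?_, ?_⟩
  · intro t ht hev
    by_cases h1 : t ∈ G
    · simp only [hτdef, if_pos h1]
      exact nl_subset (hGN (hstep t h1 hev))
    · simp only [hτdef, if_neg h1]
      by_cases h2 : WI (restrict Y (exitPt N t)) (X ∩ body (restrict Y (exitPt N t)))
      · rw [dif_pos h2]
        exact restrict_subset (h2.choose_spec.1 t ⟨ht, Or.inr (exitPt_prefix N t)⟩ hev)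
      · rw [dif_neg h2]
        exact legalMove_mem hY ht
  · intro x hx hcons
    have hG : ∀ k, seg x k ∈ N → seg x k ∈ G := by
      intro k
      induction k with
      | zero => exact fun _ => h0
      | succ k ih =>
        intro hk1
        have hk : seg x k ∈ N := nl_prefix hY hk1 (seg_prefix x (Nat.le_succ k))
        have hkG := ih hk
        rcases Nat.even_or_odd k with he | ho
        · have hxk : x k = σ (seg x k) := by
            have hc1 := hcons k he
            simp only [hτdef] at hc1
            rwa [if_pos hkG] at hc1
          rw [seg_succ, hxk]
          exact hstep _ hkG (by rw [seg_len]; exact he)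
        · rw [seg_succ]
          refine hII _ hkG (by rw [seg_len]; exact Nat.not_even_iff_odd.mpr ho) (x k) ?_
          rw [← seg_succ]
          exact hk1
    by_cases hall : ∀ k, seg x k ∈ N
    · refine ⟨hwin x hx (fun k => hG k (hall k)) ?_, hx⟩
      intro k he
      have hc1 := hcons k he
      simp only [hτdef] at hc1
      rwa [if_pos (hG k (hall k))] at hc1
    · push_neg at hall
      have hk0 : seg x (Nat.find hall) ∉ N := Nat.find_spec hall
      set k0 := Nat.find hall with hk0def
      set r := seg x k0 with hrdef
      have hmin : ∀ j, j < k0 → seg x j ∈ N := by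
        intro j hj
        by_contra hcon
        exact Nat.find_min hall hj hcon
      have hrmin : ∀ q, q <+: r → q ≠ r → q ∈ N := by
        intro q hq hne
        have hq2 : q = seg x q.length := eq_seg_of_prefix hq
        have hql : q.length < k0 := by
          have h5 := proper_length hq hne
          rwa [seg_len] at h5
        rw [hq2]
        exact hmin _ hql
      have hrY : r ∈ Y := hx k0
      have hexit := nl_exit hY hrY hk0 hrmin
      have hWI := hexit.2
      have hwt := win_tail hWI.choose_spec (x := x) hx (by rw [Ext, seg_len]) ?_
      · exact ⟨hwt.1, hx⟩
      · intro j hj hjl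
        rw [seg_len] at hjl
        have hc1 := hcons j hj
        have hnG : seg x j ∉ G := by
          intro hcon
          have h6 : seg x j ∈ N := hGN hcon
          exact hk0 (nl_prefix hY h6 (seg_prefix x hjl))
        have hpre : r <+: seg x j := seg_prefix x hjl
        simp only [hτdef] at hc1
        rw [if_neg hnG] at hc1
        rw [exitPt_eq hpre hk0 hrmin] at hc1
        rwa [dif_pos hWI] at hc1

lemma cylinder {s : Set (ℕ → ℕ)} (hs : IsOpen s) {x : ℕ → ℕ} (hx : x ∈ s) :
    ∃ k, ∀ y : ℕ → ℕ, seg y k = seg x k → y ∈ s := by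
  obtain ⟨I, u, h1, h2⟩ := isOpen_pi_iff.mp hs x hx
  refine ⟨(I.sup id) + 1, fun y hy => h2 ?_⟩
  intro i hi
  have hilt : i < I.sup id + 1 := Nat.lt_succ_of_le (Finset.le_sup (f := id) hi)
  have hyx : y i = x i := by
    have h3 := congrArg (fun l => l.getD i 0) hy
    rwa [seg_getElem y hilt, seg_getElem x hilt] at h3
  rw [hyx]
  exact (h1 i hi).2

end EIG

namespace EIG

lemma subtree_stem {Y W : Set (List ℕ)} {q : List ℕ} (hW : IsGameTree W)
    (hsub : W ⊆ restrict Y q) : ∀ r, r <+: q → r ∈ W := by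
  have hgrow : ∀ j, ∃ p ∈ W, j ≤ p.length := by
    intro j
    induction j with
    | zero => obtain ⟨p, hp⟩ := hW.1; exact ⟨p, hp, Nat.zero_le _⟩
    | succ j ih =>
      obtain ⟨p, hp, hl⟩ := ih
      obtain ⟨m, hm⟩ := hW.2.2 p hp
      exact ⟨p ++ [m], hm, by simp; omega⟩
  obtain ⟨p, hp, hl⟩ := hgrow q.length
  have hqp : q <+: p := prefix_trichotomy (hsub hp).2.symm hl
  have hqW : q ∈ W := hW.2.1 p hp q hqp
  exact fun r hr => hW.2.1 q hqW r hr

lemma prefix_snoc {p r : List ℕ} {m : ℕ} (h : r <+: p ++ [m])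
    (hne : r ≠ p ++ [m]) : r <+: p := by
  have h1 := proper_length h hne
  simp at h1
  exact prefix_trichotomy
    (List.prefix_or_prefix_of_prefix h (List.prefix_append p [m])) (by omega)

/-- The predicate: position has length even, its cone lies in `Dn` and it is good. -/
def PreP (T' : Set (List ℕ)) (A B Dn : Set (ℕ → ℕ)) (q : List ℕ) : Prop :=
  Even q.length ∧ body (restrict T' q) ⊆ Dn ∧ Good T' A B q

/-- Minimal positions in `U` satisfying `PreP`: the switching positions. -/
def SwP (U T' : Set (List ℕ)) (A B Dn : Set (ℕ → ℕ)) (q : List ℕ) : Prop :=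
  q ∈ U ∧ PreP T' A B Dn q ∧ ∀ r, r <+: q → r ≠ q → ¬ PreP T' A B Dn r

/-- `p` is a position consistent with `σ` (used by player I). -/
def ConsP (σ : List ℕ → ℕ) (p : List ℕ) : Prop :=
  ∀ j, Even j → j < p.length → p.getD j 0 = σ (p.take j)

lemma consP_prefix {σ : List ℕ → ℕ} {t r : List ℕ} (hrt : r <+: t)
    (h : ConsP σ t) : ConsP σ r := by
  intro j hj hjl
  rw [← prefix_getD hrt hjl, prefix_take hrt hjl.le]
  exact h j hj (lt_of_lt_of_le hjl hrt.length_le)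

lemma consP_nil (σ : List ℕ → ℕ) : ConsP σ [] := by
  intro j _ hjl
  simp at hjl

lemma consP_snocI {σ : List ℕ → ℕ} {p : List ℕ} (h : ConsP σ p) :
    ConsP σ (p ++ [σ p]) := by
  intro j hj hjl
  simp at hjl
  rcases eq_or_lt_of_le hjl with heq | hlt
  · subst heq
    rw [getD_append_self, List.take_left]
  · rw [prefix_getD (List.prefix_append p _) hlt,
      ← prefix_take (List.prefix_append p _) hlt.le]
    exact h j hj hlt

lemma consP_snocII {σ : List ℕ → ℕ} {p : List ℕ} {m : ℕ} (h : ConsP σ p)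
    (hodd : ¬ Even p.length) : ConsP σ (p ++ [m]) := by
  intro j hj hjl
  simp at hjl
  have hlt : j < p.length := by
    rcases eq_or_lt_of_le hjl with heq | hlt
    · exact absurd (heq ▸ hj) hodd
    · exact hlt
  rw [prefix_getD (List.prefix_append p _) hlt,
    ← prefix_take (List.prefix_append p _) hlt.le]
  exact h j hj hlt

end EIG

/- ===== auxiliary development ends ===== -/

open EIG in
/-- The implication `(+) ⇒ "∅ is good"` from the proof of the paper's
Lemma 31: if for some `n` player I has no winning strategy in
`G(Eₙ ∩ [T']; T')`, then the empty position is good. -/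
theorem empty_is_good (T : Set (List ℕ)) (hT : IsGameTree T)
    (A B : Set (ℕ → ℕ)) (hA : A ⊆ body T) (hBA : B ⊆ A)
    (D : ℕ → Set (ℕ → ℕ)) (hD : ∀ n, IsOpen (D n)) (hB : B = ⋂ n, D n)
    (hI : ¬ ∃ σ, WinStratI T A σ)
    (T' : Set (List ℕ)) (hT' : T' = NonLosing T A)
    (E : ℕ → Set (ℕ → ℕ))
    (hE : ∀ n, E n = A ∪ {x ∈ body T' | ∃ k : ℕ,
        body (restrict T' (seg x k)) ⊆ D n ∧ ¬ Good T' A B (seg x k)})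
    (hn : ∃ n, ¬ ∃ σ, WinStratI T' (E n ∩ body T') σ) :
    Good T' A B [] := by
  classical
  obtain ⟨n, hn'⟩ := hn
  have h0T : ¬ WI T (A ∩ body T) := by
    rwa [Set.inter_eq_self_of_subset_left hA]
  have hT'tree : IsGameTree T' := hT' ▸ nl_tree hT h0T
  have hT'nil : [] ∈ T' := hT' ▸ nl_nil hT h0T
  by_cases hg0 : Good T' A B []
  · exact hg0
  set U := NonLosing T' (E n) with hUdef
  have hUtree : IsGameTree U := nl_tree hT'tree hn'
  have hUnil : [] ∈ U := nl_nil hT'tree hn'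
  have hUsub : U ⊆ T' := nl_subset
  -- choice of witnesses at good positions
  set Wit : List ℕ → Set (List ℕ) := fun q =>
    if h : Good T' A B q then h.2.choose else ∅ with hWitdef
  have hWit : ∀ q, Good T' A B q → QuasiII (restrict T' q) (Wit q) ∧
      body (Wit q) ∩ B = ∅ ∧ ¬ WI (Wit q) (A ∩ body (Wit q)) := by
    intro q h
    simp only [hWitdef, dif_pos h]
    exact h.2.choose_spec
  -- abbreviations
  set Pre : List ℕ → Prop := PreP T' A B (D n) with hPredef
  set Sw : List ℕ → Prop := SwP U T' A B (D n) with hSwdef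
  have hSwGood : ∀ q, Sw q → Good T' A B q := fun q h => h.2.1.2.2
  have hSwU : ∀ q, Sw q → q ∈ U := fun q h => h.1
  have hSwNil : ¬ Sw [] := fun h => hg0 (hSwGood [] h)
  have hSwUniq : ∀ q q', Sw q → Sw q' → (q <+: q' ∨ q' <+: q) → q = q' := by
    intro q q' h h' hc
    rcases hc with hc | hc
    · rcases eq_or_ne q q' with heq | hne
      · exact heq
      · exact absurd h.2.1 (h'.2.2 q hc hne)
    · rcases eq_or_ne q' q with heq | hne
      · exact heq.symm
      · exact absurd h'.2.1 (h.2.2 q' hc hne)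
  -- the combined quasi-strategy S
  set S : Set (List ℕ) := {p | (p ∈ U ∧ ∀ r, r <+: p → ¬ Sw r) ∨
    ∃ q, Sw q ∧ p ∈ Wit q} with hSdef
  have hWitTree : ∀ q, Sw q → IsGameTree (Wit q) :=
    fun q h => (hWit q (hSwGood q h)).1.1
  have hWitSub : ∀ q, Sw q → Wit q ⊆ restrict T' q :=
    fun q h => (hWit q (hSwGood q h)).1.2.1
  have hWitStem : ∀ q, Sw q → ∀ r, r <+: q → r ∈ Wit q :=
    fun q h => subtree_stem (hWitTree q h) (hWitSub q h)
  have hWitSelf : ∀ q, Sw q → q ∈ Wit q :=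
    fun q h => hWitStem q h q List.prefix_rfl
  have hWitSubS : ∀ q, Sw q → Wit q ⊆ S :=
    fun q hq p hp => Or.inr ⟨q, hq, hp⟩
  have hSnil : [] ∈ S := by
    refine Or.inl ⟨hUnil, ?_⟩
    intro r hr
    rw [List.prefix_nil.mp hr]
    exact hSwNil
  have hSsub : S ⊆ T' := by
    rintro p (⟨h1, _⟩ | ⟨q, hq, hp⟩)
    · exact hUsub h1
    · exact ((hWitSub q hq) hp).1
  have hSpre : ∀ p ∈ S, ∀ r, r <+: p → r ∈ S := by
    rintro p (⟨h1, h2⟩ | ⟨q, hq, hp⟩) r hr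
    · exact Or.inl ⟨nl_prefix hT'tree h1 hr, fun r' hr' => h2 r' (hr'.trans hr)⟩
    · exact Or.inr ⟨q, hq, (hWitTree q hq).2.1 p hp r hr⟩
  have hResolve : ∀ p ∈ S, ∀ q, Sw q → q <+: p → p ∈ Wit q := by
    rintro p (⟨h1, h2⟩ | ⟨q', hq', hp⟩) q hq hqp
    · exact absurd hq (h2 q hqp)
    · have hcomp := ((hWitSub q' hq') hp).2
      have heq : q' = q := by
        rcases hcomp with hc | hc
        · exact (hSwUniq q q' hq hq' (Or.inl (hqp.trans hc))).symm
        · exact hSwUniq q' q hq' hq (List.prefix_or_prefix_of_prefix hc hqp)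
      rwa [heq] at hp
  -- membership of p in U for positions of S not above a switch point
  have hSU : ∀ p ∈ S, (∀ q, Sw q → ¬ q <+: p) → p ∈ U := by
    rintro p (⟨h1, _⟩ | ⟨q, hq, hp⟩) hno
    · exact h1
    · have hcomp := ((hWitSub q hq) hp).2
      rcases hcomp with hc | hc
      · exact nl_prefix hT'tree (hSwU q hq) hc
      · exact absurd hc (hno q hq)
  have hStree : IsGameTree S := by
    refine ⟨⟨[], hSnil⟩, fun p hp r hr => hSpre p hp r hr, ?_⟩
    rintro p hp
    rcases hp with ⟨h1, h2⟩ | ⟨q, hq, hp⟩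
    · obtain ⟨m, hm⟩ := hUtree.2.2 p h1
      by_cases hsw : Sw (p ++ [m])
      · exact ⟨m, hWitSubS _ hsw (hWitSelf _ hsw)⟩
      · refine ⟨m, Or.inl ⟨hm, ?_⟩⟩
        intro r hr
        rcases eq_or_ne r (p ++ [m]) with rfl | hne
        · exact hsw
        · exact h2 r (prefix_snoc hr hne)
    · obtain ⟨m, hm⟩ := (hWitTree q hq).2.2 p hp
      exact ⟨m, hWitSubS _ hq hm⟩
  have hSquasi : ∀ p ∈ S, Even p.length → ∀ m : ℕ, p ++ [m] ∈ T' →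
      p ++ [m] ∈ S := by
    intro p hp hev m hm
    by_cases hcase : ∃ q, Sw q ∧ q <+: p
    · obtain ⟨q, hq, hqp⟩ := hcase
      have hpW : p ∈ Wit q := hResolve p hp q hq hqp
      have hstep := (hWit q (hSwGood q hq)).1.2.2 p hpW hev m
        ⟨hm, Or.inr (hqp.trans (List.prefix_append p [m]))⟩
      exact hWitSubS _ hq hstep
    · push_neg at hcase
      have hpU : p ∈ U := hSU p hp hcase
      have hmU : p ++ [m] ∈ U := nl_even_step hpU hev hm
      refine Or.inl ⟨hmU, ?_⟩
      intro r hr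
      rcases eq_or_ne r (p ++ [m]) with rfl | hne
      · intro hswr
        have h5 := hswr.2.1.1
        rw [List.length_append, List.length_singleton, Nat.even_add_one] at h5
        exact h5 hev
      · intro hswr
        exact (hcase r hswr) (prefix_snoc hr hne)
  -- [S] ∩ B = ∅
  have hSB : body S ∩ B = ∅ := by
    rw [Set.eq_empty_iff_forall_notMem]
    rintro x ⟨hxS, hxB⟩
    by_cases hcase : ∃ q, Sw q ∧ seg x q.length = q
    · obtain ⟨q, hq, hqx⟩ := hcase
      have hxW : x ∈ body (Wit q) := by
        intro k
        rcases le_total k q.length with h | h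
        · exact (hWitTree q hq).2.1 q (hWitSelf q hq) _
            (by rw [← hqx]; exact seg_prefix x h)
        · exact hResolve (seg x k) (hxS k) q hq
            (by rw [← hqx]; exact seg_prefix x h)
      have h5 := (hWit q (hSwGood q hq)).2.1
      rw [Set.eq_empty_iff_forall_notMem] at h5
      exact h5 x ⟨hxW, hxB⟩
    · push_neg at hcase
      have hxU : ∀ k, seg x k ∈ U := by
        intro k
        rcases hxS k with ⟨h1, _⟩ | ⟨q, hq, hp⟩
        · exact h1
        · rcases ((hWitSub q hq) hp).2 with hc | hc
          · exact nl_prefix hT'tree (hSwU q hq) hc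
          · exact absurd (eq_seg_of_prefix hc).symm (hcase q hq)
      have hxT' : x ∈ body T' := fun k => hUsub (hxU k)
      have hxD : x ∈ D n := by
        rw [hB] at hxB
        exact Set.mem_iInter.mp hxB n
      obtain ⟨k, hk⟩ := cylinder (hD n) hxD
      have hpD : body (restrict T' (seg x (2 * k))) ⊆ D n := by
        intro y hy
        have hyx : seg y (2 * k) = seg x (2 * k) := by
          have h6 : seg y (seg x (2 * k)).length = seg x (2 * k) :=
            ext_of_body_restrict hy
          rwa [seg_len] at h6
        apply hk
        rw [← seg_take y (by omega : k ≤ 2 * k), hyx,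
          seg_take x (by omega : k ≤ 2 * k)]
      have hpev : Even (seg x (2 * k)).length := by
        rw [seg_len]; exact even_two_mul k
      by_cases hgood : Good T' A B (seg x (2 * k))
      · have hex : ∃ j, Pre (seg x j) := ⟨2 * k, hpev, hpD, hgood⟩
        have hj0 : Pre (seg x (Nat.find hex)) := Nat.find_spec hex
        have hSwr : Sw (seg x (Nat.find hex)) := by
          refine ⟨hxU _, hj0, ?_⟩
          intro r hr hne
          have h5 : r = seg x r.length := eq_seg_of_prefix hr
          have h6 : r.length < Nat.find hex := by
            have h7 := proper_length hr hne
            rwa [seg_len] at h7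
          rw [h5]
          exact Nat.find_min hex h6
        exact hcase _ hSwr (by rw [seg_len])
      · have hEsub : body (restrict T' (seg x (2 * k))) ⊆ E n := by
          intro y hy
          rw [hE n]
          have hyx : seg y (seg x (2 * k)).length = seg x (2 * k) :=
            ext_of_body_restrict hy
          refine Or.inr ⟨body_restrict_subset hy, (seg x (2 * k)).length, ?_, ?_⟩
          · rw [hyx]; exact hpD
          · rw [hyx]; exact hgood
        have hwi : WI (restrict T' (seg x (2 * k))) (E n ∩ body (restrict T' (seg x (2 * k)))) :=
          wi_of_body_subset (isGameTree_restrict hT'tree (hUsub (hxU _)))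
            (fun y hy => ⟨hEsub hy, hy⟩)
        exact nl_not_loc (hxU (2 * k)) hpev hwi
  -- I has no winning strategy in G(A ∩ [S]; S)
  have hSW : ¬ WI S (A ∩ body S) := by
    rintro ⟨σ, hσ⟩
    by_cases hreach : ∃ q, Sw q ∧ q ∈ S ∧ ConsP σ q
    · obtain ⟨q, hq, hqS, hqC⟩ := hreach
      apply (hWit q (hSwGood q hq)).2.2
      set σ' : List ℕ → ℕ := fun t =>
        if t.length < q.length then q.getD t.length 0 else σ t with hσ'def
      refine ⟨σ', ?_, ?_⟩
      · intro t ht hev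
        by_cases h1 : t.length < q.length
        · simp only [hσ'def, if_pos h1]
          have htq : t <+: q := prefix_trichotomy ((hWitSub q hq) ht).2 h1.le
          exact (hWitTree q hq).2.1 q (hWitSelf q hq) _ (take_next htq h1)
        · simp only [hσ'def, if_neg h1]
          have htS : t ∈ S := hWitSubS q hq ht
          have h2 : t ++ [σ t] ∈ S := hσ.1 t htS hev
          have hqt : q <+: t :=
            prefix_trichotomy ((hWitSub q hq) ht).2.symm (not_lt.mp h1)
          exact hResolve _ h2 q hq (hqt.trans (List.prefix_append t [σ t]))
      · intro y hy hcons'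
        have hyr : y ∈ body (restrict T' q) := fun k => (hWitSub q hq) (hy k)
        have hExtq : seg y q.length = q := ext_of_body_restrict hyr
        have hyS : y ∈ body S := fun k => hWitSubS q hq (hy k)
        have hconsσ : ConsWithI σ y := by
          intro j hj
          rcases lt_or_ge j q.length with h | h
          · have hc := hcons' j hj
            simp only [hσ'def] at hc
            rw [if_pos (by rw [seg_len]; exact h), seg_len] at hc
            have h5 : seg y j = q.take j := by
              conv_rhs => rw [← hExtq]
              rw [seg_take y h.le]
            rw [hc, h5]
            exact hqC j hj h
          · have hc := hcons' j hj
            simp only [hσ'def] at hc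
            rwa [if_neg (by rw [seg_len]; omega)] at hc
        exact ⟨(hσ.2 y hyS hconsσ).1, hy⟩
    · push_neg at hreach
      apply hn'
      refine patch hT'tree {p | p ∈ U ∧ p ∈ S ∧ ConsP σ p} σ
        (fun p hp => hp.1) ⟨hUnil, hSnil, consP_nil σ⟩ ?_ ?_ ?_
      · rintro p ⟨hpU, hpS, hpC⟩ hev
        have h1 : p ++ [σ p] ∈ S := hσ.1 p hpS hev
        have h2 : ConsP σ (p ++ [σ p]) := consP_snocI hpC
        have h3 : p ++ [σ p] ∈ U := by
          refine hSU _ h1 ?_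
          intro q hq hqp
          refine hreach q hq (hWitSubS q hq (hWitSelf q hq)) ?_
          exact consP_prefix hqp h2
        exact ⟨h3, h1, h2⟩
      · rintro p ⟨hpU, hpS, hpC⟩ hodd m hmU
        have h2 : ConsP σ (p ++ [m]) := consP_snocII hpC hodd
        refine ⟨hmU, Or.inl ⟨hmU, ?_⟩, h2⟩
        intro r hr hswr
        rcases eq_or_ne r (p ++ [m]) with rfl | hne
        · exact hreach _ hswr (hWitSubS _ hswr (hWitSelf _ hswr)) h2
        · have hrp : r <+: p := prefix_snoc hr hne
          exact hreach r hswr (hSpre p hpS r hrp) (consP_prefix hrp hpC)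
      · intro x hx hG hcons
        have hxS : x ∈ body S := fun k => (hG k).2.1
        have hxA := hσ.2 x hxS hcons
        rw [hE n]
        exact Or.inl hxA.1
  exact ⟨hT'nil, S, by rw [restrict_nil]; exact ⟨hStree, hSsub, hSquasi⟩, hSB, hSW⟩
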